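/- Fix δ > 0. For N ∈ ℕ large enough that Γ − N^δ Q and 2Γ − N^δ Q are invertible, define m₁(N) := N·π^TΛ(Γ − N^δ Q)^{-1}𝟏, m₂(N) := 2N(N−1)·π^TΛ(Γ − N^δ Q)^{-1}Λ(2Γ − N^δ Q)^{-1}𝟏, and V(N) := m₂(N) + m₁(N) − m₁(N)². Then, as N → ∞, V(N) = N·ρ̄(1−ρ̄) + N^{2−δ}·v + o(N^{max{1, 2−δ}}), where v := (1/γ⋆)·π^T(Λ − ρ̄Γ)D(Λ − ρ̄Γ)𝟏. -/

import Mathlib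

open Matrix Filter Asymptotics Topology

attribute [local instance] Matrix.linftyOpNormedAddCommGroup Matrix.linftyOpNormedRing
  Matrix.linftyOpNormedAlgebra

variable {d : ℕ}

lemma vecMul_vecMulVec (w u v : Fin d → ℝ) :
    Matrix.vecMul w (vecMulVec u v) = (w ⬝ᵥ u) • v := by
  ext j
  simp [Matrix.vecMul, vecMulVec_apply, dotProduct, Finset.sum_mul, mul_assoc]

lemma vecMulVec_mulVec' (u v x : Fin d → ℝ) :
    (vecMulVec u v).mulVec x = (v ⬝ᵥ x) • u := by
  ext i
  simp only [Matrix.mulVec, vecMulVec_apply, dotProduct, Pi.smul_apply, smul_eq_mul,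
    Finset.sum_mul]
  exact Finset.sum_congr rfl fun j _ => by ring

lemma mul_vecMulVec (M : Matrix (Fin d) (Fin d) ℝ) (u v : Fin d → ℝ) :
    M * vecMulVec u v = vecMulVec (M.mulVec u) v := by
  ext i j
  simp [Matrix.mul_apply, vecMulVec_apply, Matrix.mulVec, dotProduct, Finset.sum_mul, mul_assoc]

lemma vecMulVec_mul (u v : Fin d → ℝ) (M : Matrix (Fin d) (Fin d) ℝ) :
    vecMulVec u v * M = vecMulVec u (Matrix.vecMul v M) := by
  ext i j
  simp [Matrix.mul_apply, vecMulVec_apply, Matrix.vecMul, dotProduct, Finset.mul_sum, mul_assoc]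

lemma vecMul_smulM (v : Fin d → ℝ) (c : ℝ) (M : Matrix (Fin d) (Fin d) ℝ) :
    Matrix.vecMul v (c • M) = c • Matrix.vecMul v M := by
  ext j
  simp only [Matrix.vecMul, dotProduct, Matrix.smul_apply, Pi.smul_apply, smul_eq_mul,
    Finset.mul_sum]
  exact Finset.sum_congr rfl fun i _ => by ring

lemma hasDerivAt_quadform (p q : Fin d → ℝ) {M : ℝ → Matrix (Fin d) (Fin d) ℝ}
    {M' : Matrix (Fin d) (Fin d) ℝ} {x : ℝ} (hM : HasDerivAt M M' x) :
    HasDerivAt (fun s => Matrix.vecMul p (M s) ⬝ᵥ q) (Matrix.vecMul p M' ⬝ᵥ q) x := by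
  let L : Matrix (Fin d) (Fin d) ℝ →ₗ[ℝ] ℝ :=
    { toFun := fun A => Matrix.vecMul p A ⬝ᵥ q
      map_add' := fun A B => by
        rw [Matrix.vecMul_add, add_dotProduct]
      map_smul' := fun c A => by
        rw [vecMul_smulM, smul_dotProduct, RingHom.id_apply] }
  have := (L.toContinuousLinearMap.hasFDerivAt (x := M x)).comp_hasDerivAt x hM
  exact this

theorem stmt_12
    (d : ℕ) (hd : 2 ≤ d)
    (Q : Matrix (Fin d) (Fin d) ℝ) (π lam mu : Fin d → ℝ)
    (hQoff : ∀ i j, i ≠ j → 0 ≤ Q i j)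
    (hQrow : ∀ i, ∑ j, Q i j = 0)
    (hrker : ∀ v : Fin d → ℝ, Q.mulVec v = 0 ↔ ∃ c : ℝ, v = c • (1 : Fin d → ℝ))
    (hlker : ∀ w : Fin d → ℝ, Q.vecMul w = 0 ↔ ∃ c : ℝ, w = c • π)
    (hπpos : ∀ i, 0 < π i) (hπsum : ∑ i, π i = 1)
    (hlam : ∀ i, 0 ≤ lam i) (hmu : ∀ i, 0 ≤ mu i)
    (hγpos : ∀ i, 0 < lam i + mu i)
    (hinv : IsUnit (vecMulVec 1 π - Q))
    (δ : ℝ) (hδ : 0 < δ) :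
    (fun N : ℕ =>
        ((2 * (N : ℝ) * ((N : ℝ) - 1) *
            (Matrix.vecMul π
              (Matrix.diagonal lam *
                  (Matrix.diagonal (fun i => lam i + mu i) - ((N : ℝ) ^ δ) • Q)⁻¹ *
                Matrix.diagonal lam *
                  ((2 : ℝ) • Matrix.diagonal (fun i => lam i + mu i) - ((N : ℝ) ^ δ) • Q)⁻¹) ⬝ᵥ 1))
          + ((N : ℝ) *
              (Matrix.vecMul π
                (Matrix.diagonal lam *
                  (Matrix.diagonal (fun i => lam i + mu i) - ((N : ℝ) ^ δ) • Q)⁻¹) ⬝ᵥ 1))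
          - ((N : ℝ) *
              (Matrix.vecMul π
                (Matrix.diagonal lam *
                  (Matrix.diagonal (fun i => lam i + mu i) - ((N : ℝ) ^ δ) • Q)⁻¹) ⬝ᵥ 1)) ^ 2)
        - (N : ℝ) * ((π ⬝ᵥ lam) / (π ⬝ᵥ (lam + mu))) * (1 - (π ⬝ᵥ lam) / (π ⬝ᵥ (lam + mu)))
        - (N : ℝ) ^ ((2 : ℝ) - δ) *
            ((1 / (π ⬝ᵥ (lam + mu))) *
              (Matrix.vecMul π
                ((Matrix.diagonal lam -
                    ((π ⬝ᵥ lam) / (π ⬝ᵥ (lam + mu))) •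
                      Matrix.diagonal (fun i => lam i + mu i)) *
                  ((vecMulVec 1 π - Q)⁻¹ - vecMulVec 1 π) *
                  (Matrix.diagonal lam -
                    ((π ⬝ᵥ lam) / (π ⬝ᵥ (lam + mu))) •
                      Matrix.diagonal (fun i => lam i + mu i))) ⬝ᵥ 1)))
      =o[atTop] (fun N : ℕ => (N : ℝ) ^ (max (1 : ℝ) (2 - δ))) := by
  classical
  -- abbreviations
  set γv : Fin d → ℝ := fun i => lam i + mu i with hγv
  set Γm : Matrix (Fin d) (Fin d) ℝ := Matrix.diagonal γv with hΓm
  set Λm : Matrix (Fin d) (Fin d) ℝ := Matrix.diagonal lam with hΛm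
  set Em : Matrix (Fin d) (Fin d) ℝ := vecMulVec 1 π with hEm
  set Sm : Matrix (Fin d) (Fin d) ℝ := vecMulVec γv π - Q with hSm
  set Wm : Matrix (Fin d) (Fin d) ℝ := vecMulVec 1 π - Q with hWm
  set las : ℝ := π ⬝ᵥ lam with hlas
  set γs : ℝ := π ⬝ᵥ (lam + mu) with hγs
  set ρ : ℝ := las / γs with hρdef
  set πl : Fin d → ℝ := fun i => π i * lam i with hπl
  set πγ : Fin d → ℝ := fun i => π i * γv i with hπγ
  set a : Fin d → ℝ := fun i => π i * (lam i - ρ * γv i) with ha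
  set b : Fin d → ℝ := fun i => lam i - ρ * γv i with hb
  have hπ1 : π ⬝ᵥ (1 : Fin d → ℝ) = 1 := by simp [dotProduct, hπsum]
  have hπγs : π ⬝ᵥ γv = γs := by simp [hγs, dotProduct, hγv]
  have hγs_pos : 0 < γs := by
    rw [← hπγs]
    exact Finset.sum_pos (fun i _ => mul_pos (hπpos i) (hγpos i)) ⟨⟨0, by omega⟩, Finset.mem_univ _⟩
  have hργ : ρ * γs = las := div_mul_cancel₀ _ hγs_pos.ne'
  have hπQ : Q.vecMul π = 0 := (hlker π).mpr ⟨1, (one_smul ℝ π).symm⟩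
  have hQ1 : Q.mulVec 1 = 0 := by
    ext i; simp [Matrix.mulVec, dotProduct, hQrow i]
  -- S is invertible
  have hπΓ : Matrix.vecMul π Γm = πγ := by
    ext i; rw [hΓm, Matrix.vecMul_diagonal]
  have hπΛ : Matrix.vecMul π Λm = πl := by
    ext i; rw [hΛm, Matrix.vecMul_diagonal]
  have hΓ1 : Γm.mulVec 1 = γv := by
    ext i; rw [hΓm, Matrix.mulVec_diagonal]; exact mul_one _
  have hΛ1 : Λm.mulVec 1 = lam := by
    ext i; rw [hΛm, Matrix.mulVec_diagonal]; exact mul_one _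
  have hSdet : IsUnit Sm.det := by
    rw [isUnit_iff_ne_zero]
    intro h0
    obtain ⟨v, hv0, hv⟩ := (Matrix.exists_mulVec_eq_zero_iff (M := Sm)).mpr h0
    have hexp : (π ⬝ᵥ v) • γv - Q.mulVec v = 0 := by
      simpa [hSm, Matrix.sub_mulVec, vecMulVec_mulVec'] using hv
    have hQv : Q.mulVec v = (π ⬝ᵥ v) • γv := (sub_eq_zero.mp hexp).symm
    have hπv : π ⬝ᵥ v = 0 := by
      have h2 : π ⬝ᵥ Q.mulVec v = 0 := by
        rw [Matrix.dotProduct_mulVec, hπQ, zero_dotProduct]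
      rw [hQv, dotProduct_smul, smul_eq_mul, hπγs] at h2
      exact (mul_eq_zero.mp h2).resolve_right hγs_pos.ne'
    have hQv0 : Q.mulVec v = 0 := by rw [hQv, hπv, zero_smul]
    obtain ⟨c, rfl⟩ := (hrker v).mp hQv0
    rw [dotProduct_smul, smul_eq_mul, hπ1, mul_one] at hπv
    exact hv0 (by rw [hπv, zero_smul])
  have hSS : Sm * Sm⁻¹ = 1 := Matrix.mul_nonsing_inv _ hSdet
  have hSS' : Sm⁻¹ * Sm = 1 := Matrix.nonsing_inv_mul _ hSdet
  have hπSm : Matrix.vecMul π Sm = γs • π := by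
    rw [hSm, Matrix.vecMul_sub, hπQ, _root_.vecMul_vecMulVec, hπγs, sub_zero]
  have hπS : Matrix.vecMul π Sm⁻¹ = γs⁻¹ • π := by
    have h1 : Matrix.vecMul (Matrix.vecMul π Sm) Sm⁻¹ = π := by
      rw [Matrix.vecMul_vecMul, hSS, Matrix.vecMul_one]
    rw [hπSm, Matrix.smul_vecMul] at h1
    calc Matrix.vecMul π Sm⁻¹ = γs⁻¹ • (γs • Matrix.vecMul π Sm⁻¹) := by
          rw [smul_smul, inv_mul_cancel₀ hγs_pos.ne', one_smul]
      _ = γs⁻¹ • π := by rw [h1]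
  have hSones : Sm.mulVec 1 = γv := by
    rw [hSm, Matrix.sub_mulVec, hQ1, sub_zero, vecMulVec_mulVec', hπ1, one_smul]
  have hSγ : Sm⁻¹.mulVec γv = 1 := by
    rw [← hSones, Matrix.mulVec_mulVec, hSS', Matrix.one_mulVec]
  -- W facts
  have hWdet : IsUnit Wm.det := (Matrix.isUnit_iff_isUnit_det _).mp hinv
  have hπWm : Matrix.vecMul π Wm = π := by
    rw [hWm, Matrix.vecMul_sub, hπQ, _root_.vecMul_vecMulVec, hπ1, one_smul, sub_zero]
  have hπW : Matrix.vecMul π Wm⁻¹ = π := by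
    conv_lhs => rw [← hπWm]
    rw [Matrix.vecMul_vecMul, Matrix.mul_nonsing_inv _ hWdet, Matrix.vecMul_one]
  set x : Fin d → ℝ := Wm⁻¹.mulVec b with hx
  have hπb : π ⬝ᵥ b = 0 := by
    have h1 : π ⬝ᵥ b = (π ⬝ᵥ lam) - ρ * (π ⬝ᵥ γv) := by
      simp only [dotProduct, hb, Finset.mul_sum, ← Finset.sum_sub_distrib]
      exact Finset.sum_congr rfl fun i _ => by ring
    rw [h1, hπγs, ← hlas, hργ, sub_self]
  have hπx : π ⬝ᵥ x = 0 := by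
    rw [hx, Matrix.dotProduct_mulVec, hπW, hπb]
  have hSW : Sm = Wm + vecMulVec (γv - 1) π := by
    rw [hSm, hWm]; ext i j
    simp only [Matrix.sub_apply, Matrix.add_apply, vecMulVec_apply, Pi.sub_apply, Pi.one_apply]
    ring
  have hSx : Sm.mulVec x = b := by
    rw [hSW, Matrix.add_mulVec, vecMulVec_mulVec', hπx, zero_smul, add_zero, hx,
      Matrix.mulVec_mulVec, Matrix.mul_nonsing_inv _ hWdet, Matrix.one_mulVec]
  have hSb : Sm⁻¹.mulVec b = x := by
    rw [← hSx, Matrix.mulVec_mulVec, hSS', Matrix.one_mulVec]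
  have ha1 : a ⬝ᵥ (1 : Fin d → ℝ) = 0 := by
    have h1 : a ⬝ᵥ (1 : Fin d → ℝ) = π ⬝ᵥ b := by
      simp [ha, hb, dotProduct]
    rw [h1, hπb]
  -- the drift constant
  set vv : ℝ := γs⁻¹ * (a ⬝ᵥ x) with hvv
  -- the curves
  set U : ℝ → Matrix (Fin d) (Fin d) ℝ := fun s => s • Γm + Sm with hU
  have hU0 : U 0 = Sm := by simp [hU]
  set H : ℝ → Matrix (Fin d) (Fin d) ℝ := fun s => (s • 1 + Em) * (U s)⁻¹ with hH
  set H0 : Matrix (Fin d) (Fin d) ℝ := Em * Sm⁻¹ with hH0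
  set H1 : Matrix (Fin d) (Fin d) ℝ := Sm⁻¹ + Em * -(Sm⁻¹ * Γm * Sm⁻¹) with hH1
  have hHval0 : H 0 = H0 := by simp [hH, hH0, hU0]
  set f₁ : ℝ → ℝ := fun s => Matrix.vecMul π (Λm * H s) ⬝ᵥ 1 with hf₁
  set f₂ : ℝ → ℝ := fun s =>
    Matrix.vecMul π (Λm * H s * Λm * ((2:ℝ)⁻¹ • H (2 * s))) ⬝ᵥ 1 with hf₂
  -- derivative of the inverse curve
  have hUd : ∀ s : ℝ, HasDerivAt U Γm s := by
    intro s
    have := ((hasDerivAt_id s).smul_const Γm).add_const Sm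
    simp only [hU, id_eq, one_smul] at this ⊢
    exact this
  have hSunit : IsUnit Sm := (Matrix.isUnit_iff_isUnit_det _).mpr hSdet
  have hVd : HasDerivAt (fun s => (U s)⁻¹) (-(Sm⁻¹ * Γm * Sm⁻¹)) 0 := by
    have hcoe : (hSunit.unit : Matrix (Fin d) (Fin d) ℝ) = Sm := hSunit.unit_spec
    have hcoeinv : ((hSunit.unit⁻¹ : (Matrix (Fin d) (Fin d) ℝ)ˣ) : Matrix (Fin d) (Fin d) ℝ)
        = Sm⁻¹ := by rw [Matrix.coe_units_inv, hcoe]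
    have hf := hasFDerivAt_ringInverse (𝕜 := ℝ) hSunit.unit
    rw [hcoe] at hf
    have hf0 : HasFDerivAt Ring.inverse
        (-ContinuousLinearMap.mulLeftRight ℝ (Matrix (Fin d) (Fin d) ℝ)
          ↑hSunit.unit⁻¹ ↑hSunit.unit⁻¹) (U 0) := by rw [hU0]; exact hf
    have hco := hf0.comp_hasDerivAt 0 (hUd 0)
    have heq : (fun s => (U s)⁻¹) = fun s => Ring.inverse (U s) := by
      funext s; rw [Matrix.nonsing_inv_eq_ringInverse]
    rw [heq]
    refine hco.congr_deriv ?_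
    simp [hcoeinv, mul_assoc]
  have hAd : HasDerivAt (fun s : ℝ => s • (1 : Matrix (Fin d) (Fin d) ℝ) + Em)
      (1 : Matrix (Fin d) (Fin d) ℝ) 0 := by
    have := ((hasDerivAt_id (0:ℝ)).smul_const (1 : Matrix (Fin d) (Fin d) ℝ)).add_const Em
    simp only [id_eq, one_smul] at this
    exact this
  have hHd : HasDerivAt H H1 0 := by
    have := hAd.mul hVd
    rw [hH, hH1]
    refine this.congr_deriv ?_
    simp [hU0]
  -- scalar values and derivatives
  have hπl1 : πl ⬝ᵥ (1 : Fin d → ℝ) = las := by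
    simp [hπl, hlas, dotProduct]
  have F1 : Matrix.vecMul πl Em = las • π := by
    rw [hEm, _root_.vecMul_vecMulVec, hπl1]
  have F2 : Matrix.vecMul πl H0 = ρ • π := by
    rw [hH0, ← Matrix.vecMul_vecMul, F1, Matrix.smul_vecMul, hπS, smul_smul, hρdef,
      div_eq_mul_inv]
  have hf₁0 : f₁ 0 = ρ := by
    have h0 : f₁ 0 = Matrix.vecMul π (Λm * H 0) ⬝ᵥ 1 := rfl
    rw [h0, hHval0, ← Matrix.vecMul_vecMul, hπΛ, F2, smul_dotProduct, hπ1, smul_eq_mul,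
      mul_one]
  have hf₂0 : f₂ 0 = 2⁻¹ * (ρ * ρ) := by
    have h0 : f₂ 0 = Matrix.vecMul π (Λm * H 0 * Λm * (2:ℝ)⁻¹ • H (2 * 0)) ⬝ᵥ 1 := rfl
    rw [h0, mul_zero, hHval0, ← Matrix.vecMul_vecMul, ← Matrix.vecMul_vecMul,
      ← Matrix.vecMul_vecMul, hπΛ, F2, Matrix.smul_vecMul, hπΛ, Matrix.smul_vecMul,
      vecMul_smulM, F2, smul_dotProduct, smul_dotProduct, smul_dotProduct,
      hπ1]
    simp only [smul_eq_mul, mul_one]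
    ring
  have hf₁d : HasDerivAt f₁ (Matrix.vecMul πl H1 ⬝ᵥ 1) 0 := by
    have h := hasDerivAt_quadform π 1 (hHd.const_mul Λm)
    rw [← Matrix.vecMul_vecMul, hπΛ] at h
    exact h
  have hf₂d : HasDerivAt f₂
      (Matrix.vecMul πl (H1 * Λm * ((2:ℝ)⁻¹ • H0) + H0 * Λm * H1) ⬝ᵥ 1) 0 := by
    have c1 : HasDerivAt (fun s => Λm * H s * Λm) (Λm * H1 * Λm) 0 := (hHd.const_mul Λm).mul_const Λm
    have h2s : HasDerivAt (fun s : ℝ => 2 * s) 2 0 := by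
      simpa using (hasDerivAt_id (0:ℝ)).const_mul 2
    have hH20 : HasDerivAt H H1 (2 * 0) := by rw [mul_zero]; exact hHd
    have c2 : HasDerivAt (fun s : ℝ => H (2 * s)) ((2:ℝ) • H1) 0 := by
      exact HasDerivAt.scomp (𝕜 := ℝ) 0 hH20 h2s
    have c3 : HasDerivAt (fun s : ℝ => (2:ℝ)⁻¹ • H (2 * s)) ((2:ℝ)⁻¹ • ((2:ℝ) • H1)) 0 :=
      by exact c2.const_smul (2:ℝ)⁻¹
    have c4 := c1.mul c3
    have h := hasDerivAt_quadform π 1 c4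
    simp only [mul_zero, hHval0] at h
    have h21 : (2:ℝ)⁻¹ • ((2:ℝ) • H1) = H1 := by
      rw [smul_smul]; norm_num
    have hmm : Λm * (H1 * Λm * ((2:ℝ)⁻¹ • H0) + H0 * Λm * H1)
        = Λm * H1 * Λm * ((2:ℝ)⁻¹ • H0) + Λm * H0 * Λm * ((2:ℝ)⁻¹ • ((2:ℝ) • H1)) := by
      rw [h21, mul_add]
      simp only [Matrix.mul_assoc]
    rw [← hπΛ, Matrix.vecMul_vecMul, hmm]
    exact h
  -- the combined function g and its derivative
  set g : ℝ → ℝ := fun s => 2 * f₂ s - f₁ s ^ 2 with hg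
  have hg0 : g 0 = 0 := by simp [hg, hf₁0, hf₂0]; ring
  -- main algebraic computation for the derivative
  have haa : πl - ρ • πγ = a := by
    ext i; simp only [Pi.sub_apply, Pi.smul_apply, smul_eq_mul, hπl, hπγ, ha]; ring
  have F3 : Matrix.vecMul πl H1 = Matrix.vecMul a Sm⁻¹ := by
    have h1 : Matrix.vecMul πl H1
        = Matrix.vecMul πl Sm⁻¹ + las • -(γs⁻¹ • Matrix.vecMul πγ Sm⁻¹) := by
      rw [hH1, Matrix.vecMul_add, ← Matrix.vecMul_vecMul, F1, Matrix.smul_vecMul,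
        Matrix.vecMul_neg, ← Matrix.vecMul_vecMul, ← Matrix.vecMul_vecMul, hπS,
        Matrix.smul_vecMul, hπΓ, Matrix.smul_vecMul]
    have h2 : Matrix.vecMul a Sm⁻¹
        = Matrix.vecMul πl Sm⁻¹ - ρ • Matrix.vecMul πγ Sm⁻¹ := by
      rw [← haa, Matrix.sub_vecMul, Matrix.smul_vecMul]
    rw [h1, h2, hρdef, div_eq_mul_inv]
    ext i
    simp only [Pi.add_apply, Pi.sub_apply, Pi.smul_apply, Pi.neg_apply, smul_eq_mul]
    ring
  have hld : lam = b + ρ • γv := by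
    ext i; simp only [Pi.add_apply, Pi.smul_apply, smul_eq_mul, hb]; ring
  have T3 : Matrix.vecMul a Sm⁻¹ ⬝ᵥ lam = a ⬝ᵥ x := by
    rw [← Matrix.dotProduct_mulVec]
    conv_lhs => rw [hld]
    rw [Matrix.mulVec_add, Matrix.mulVec_smul, hSb, hSγ, dotProduct_add,
      dotProduct_smul, ha1, smul_eq_mul, mul_zero, add_zero]
  have hdiagdot : ∀ t : Fin d → ℝ, Matrix.vecMul t Λm ⬝ᵥ 1 = t ⬝ᵥ lam := by
    intro t
    simp [Matrix.vecMul_diagonal, dotProduct, hΛm]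
  have T1 : Matrix.vecMul πl (H1 * Λm * H0) ⬝ᵥ 1 = γs⁻¹ * (a ⬝ᵥ x) := by
    rw [← Matrix.vecMul_vecMul πl (H1 * Λm) H0, ← Matrix.vecMul_vecMul πl H1 Λm, F3, hH0,
      ← Matrix.vecMul_vecMul _ Em Sm⁻¹, hEm, _root_.vecMul_vecMulVec]
    have hdot : Matrix.vecMul (Matrix.vecMul a Sm⁻¹) Λm ⬝ᵥ (1 : Fin d → ℝ)
        = a ⬝ᵥ x := by rw [hdiagdot, T3]
    rw [Matrix.smul_vecMul, hπS, hdot, smul_dotProduct, smul_dotProduct, hπ1]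
    simp only [smul_eq_mul, mul_one]
    ring
  have T2 : Matrix.vecMul πl (H0 * Λm * H1) ⬝ᵥ 1 = ρ * (Matrix.vecMul πl H1 ⬝ᵥ 1) := by
    rw [← Matrix.vecMul_vecMul, ← Matrix.vecMul_vecMul, F2, Matrix.smul_vecMul, hπΛ,
      Matrix.smul_vecMul, smul_dotProduct, smul_eq_mul]
  have Tsplit : Matrix.vecMul πl (H1 * Λm * ((2:ℝ)⁻¹ • H0)) ⬝ᵥ 1
      = 2⁻¹ * (Matrix.vecMul πl (H1 * Λm * H0) ⬝ᵥ 1) := by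
    rw [mul_smul_comm, vecMul_smulM, smul_dotProduct, smul_eq_mul]
  have halg : 2 * (Matrix.vecMul πl (H1 * Λm * ((2:ℝ)⁻¹ • H0) + H0 * Λm * H1) ⬝ᵥ 1)
      - 2 * ρ * (Matrix.vecMul πl H1 ⬝ᵥ 1) = vv := by
    rw [Matrix.vecMul_add, add_dotProduct, Tsplit, T1, T2, hvv]
    ring
  have hgd : HasDerivAt g vv 0 := by
    have hcomb := (hf₂d.const_mul (2:ℝ)).sub (hf₁d.pow 2)
    have : HasDerivAt g (2 * (Matrix.vecMul πl (H1 * Λm * ((2:ℝ)⁻¹ • H0) + H0 * Λm * H1) ⬝ᵥ 1)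
        - 2 * f₁ 0 ^ 1 * (Matrix.vecMul πl H1 ⬝ᵥ 1)) 0 := by
      rw [hg]
      refine hcomb.congr_deriv ?_
      norm_num
    rw [hf₁0, pow_one] at this
    rwa [halg] at this
  -- identification of vv with the statement's v
  have hvid : (1 / γs) *
      (Matrix.vecMul π ((Λm - ρ • Γm) * (Wm⁻¹ - Em) * (Λm - ρ • Γm)) ⬝ᵥ 1) = vv := by
    have hπA : Matrix.vecMul π (Λm - ρ • Γm) = a := by
      rw [Matrix.vecMul_sub, vecMul_smulM, hπΛ, hπΓ, ← haa]
    have hA1 : (Λm - ρ • Γm).mulVec 1 = b := by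
      rw [Matrix.sub_mulVec, Matrix.smul_mulVec, hΛ1, hΓ1]
      ext i; simp only [Pi.sub_apply, Pi.smul_apply, smul_eq_mul, hb]
    have hDb : (Wm⁻¹ - Em).mulVec b = x := by
      rw [Matrix.sub_mulVec, hEm, vecMulVec_mulVec', hπb, zero_smul, sub_zero, hx]
    have hch : Matrix.vecMul π ((Λm - ρ • Γm) * (Wm⁻¹ - Em) * (Λm - ρ • Γm)) ⬝ᵥ 1
        = a ⬝ᵥ x := by
      rw [← Matrix.dotProduct_mulVec, ← Matrix.mulVec_mulVec, ← Matrix.mulVec_mulVec, hA1,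
        hDb, Matrix.dotProduct_mulVec, hπA]
    rw [hch, hvv, one_div]
  -- epsilon
  set e : ℕ → ℝ := fun N => (N : ℝ) ^ (-δ) with he
  have he0 : Tendsto e atTop (𝓝 0) :=
    (tendsto_rpow_neg_atTop hδ).comp tendsto_natCast_atTop_atTop
  have he0' : Tendsto (fun N => 2 * e N) atTop (𝓝 0) := by
    simpa using he0.const_mul 2
  have hdetcont : Continuous fun s => (U s).det := by
    have hUcont : Continuous U := by
      rw [hU]
      exact (continuous_id.smul continuous_const).add continuous_const
    exact hUcont.matrix_det
  have hdetS : (U 0).det ≠ 0 := by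
    rw [hU0]; exact isUnit_iff_ne_zero.mp hSdet
  have hev1 : ∀ᶠ N : ℕ in atTop, IsUnit (U (e N)).det := by
    have ht : Tendsto (fun N : ℕ => (U (e N)).det) atTop (𝓝 ((U 0).det)) :=
      (hdetcont.continuousAt (x := 0)).tendsto.comp he0
    exact (ht.eventually_ne hdetS).mono fun N hN => isUnit_iff_ne_zero.mpr hN
  have hev2 : ∀ᶠ N : ℕ in atTop, IsUnit (U (2 * e N)).det := by
    have ht : Tendsto (fun N : ℕ => (U (2 * e N)).det) atTop (𝓝 ((U 0).det)) :=
      (hdetcont.continuousAt (x := 0)).tendsto.comp he0'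
    exact (ht.eventually_ne hdetS).mono fun N hN => isUnit_iff_ne_zero.mpr hN
  -- eventual identification of the target function
  have hkey : (fun N : ℕ =>
        ((2 * (N : ℝ) * ((N : ℝ) - 1) *
            (Matrix.vecMul π
              (Λm * (Γm - ((N : ℝ) ^ δ) • Q)⁻¹ * Λm *
                  ((2 : ℝ) • Γm - ((N : ℝ) ^ δ) • Q)⁻¹) ⬝ᵥ 1))
          + ((N : ℝ) * (Matrix.vecMul π (Λm * (Γm - ((N : ℝ) ^ δ) • Q)⁻¹) ⬝ᵥ 1))
          - ((N : ℝ) * (Matrix.vecMul π (Λm * (Γm - ((N : ℝ) ^ δ) • Q)⁻¹) ⬝ᵥ 1)) ^ 2)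
        - (N : ℝ) * ρ * (1 - ρ)
        - (N : ℝ) ^ ((2 : ℝ) - δ) *
            ((1 / γs) * (Matrix.vecMul π ((Λm - ρ • Γm) * (Wm⁻¹ - Em) * (Λm - ρ • Γm)) ⬝ᵥ 1)))
      =ᶠ[atTop] fun N : ℕ =>
        (N : ℝ) ^ 2 * (g (e N) - e N * vv) + (N : ℝ) * ((f₁ (e N) - 2 * f₂ (e N)) - ρ * (1 - ρ)) := by
    filter_upwards [hev1, hev2, eventually_ge_atTop 1] with N h1 h2 hN
    have hN1 : (1:ℝ) ≤ (N:ℝ) := by exact_mod_cast hN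
    have hN0 : (0:ℝ) < (N:ℝ) := lt_of_lt_of_le one_pos hN1
    have hprod : (N:ℝ) ^ δ * e N = 1 := by
      rw [he]
      simp only
      rw [Real.rpow_neg hN0.le]
      exact mul_inv_cancel₀ (Real.rpow_pos_of_pos hN0 δ).ne'
    have hQE : Q * Em = 0 := by
      rw [hEm, _root_.mul_vecMulVec, hQ1]
      ext i j; simp [vecMulVec_apply]
    have hΓE : Γm * Em = vecMulVec γv π := by
      rw [hEm, _root_.mul_vecMulVec, hΓ1]
    have hmul1 : (Γm - ((N:ℝ) ^ δ) • Q) * (e N • 1 + Em) = U (e N) := by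
      have e1 : Γm * ((e N) • (1 : Matrix (Fin d) (Fin d) ℝ)) = (e N) • Γm := by
        rw [mul_smul_comm, mul_one]
      have e2 : ((((N:ℝ) ^ δ) • Q) : Matrix (Fin d) (Fin d) ℝ) * ((e N) • 1) = Q := by
        rw [smul_mul_assoc, mul_smul_comm, mul_one, smul_smul, hprod, one_smul]
      have e3 : ((((N:ℝ) ^ δ) • Q) : Matrix (Fin d) (Fin d) ℝ) * Em = 0 := by
        rw [smul_mul_assoc, hQE, smul_zero]
      rw [sub_mul, mul_add, mul_add, e1, e2, e3, hΓE, hU, hSm]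
      simp only
      abel
    have hinv1 : (Γm - ((N:ℝ) ^ δ) • Q)⁻¹ = H (e N) := by
      apply Matrix.inv_eq_right_inv
      rw [hH]
      simp only
      rw [← Matrix.mul_assoc, hmul1, Matrix.mul_nonsing_inv _ h1]
    have hmul2 : ((2:ℝ) • Γm - ((N:ℝ) ^ δ) • Q) * ((2 * e N) • 1 + Em)
        = (2:ℝ) • U (2 * e N) := by
      have e1 : (((2:ℝ) • Γm) : Matrix (Fin d) (Fin d) ℝ) * ((2 * e N) • 1)
          = (2:ℝ) • ((2 * e N) • Γm) := by
        rw [smul_mul_assoc, mul_smul_comm, mul_one]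
      have e2 : ((((N:ℝ) ^ δ) • Q) : Matrix (Fin d) (Fin d) ℝ) * ((2 * e N) • 1)
          = (2:ℝ) • Q := by
        rw [smul_mul_assoc, mul_smul_comm, mul_one, smul_smul]
        have hc1 : (N:ℝ) ^ δ * (2 * e N) = 2 := by
          rw [mul_comm 2 (e N), ← mul_assoc, hprod, one_mul]
        rw [hc1]
      have e3 : ((((N:ℝ) ^ δ) • Q) : Matrix (Fin d) (Fin d) ℝ) * Em = 0 := by
        rw [smul_mul_assoc, hQE, smul_zero]
      have e4 : (((2:ℝ) • Γm) : Matrix (Fin d) (Fin d) ℝ) * Em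
          = (2:ℝ) • vecMulVec γv π := by
        rw [smul_mul_assoc, hΓE]
      rw [sub_mul, mul_add, mul_add, e1, e2, e3, e4, hU, hSm]
      simp only
      rw [smul_add, smul_sub]
      abel
    have hinv2 : ((2:ℝ) • Γm - ((N:ℝ) ^ δ) • Q)⁻¹ = (2:ℝ)⁻¹ • H (2 * e N) := by
      apply Matrix.inv_eq_right_inv
      rw [hH]
      simp only
      rw [mul_smul_comm, ← Matrix.mul_assoc, hmul2, smul_mul_assoc,
        Matrix.mul_nonsing_inv _ h2, smul_smul]
      norm_num
    have hsplit : (N:ℝ) ^ ((2:ℝ) - δ) = (N:ℝ) ^ 2 * e N := by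
      rw [he]
      simp only
      rw [sub_eq_add_neg, Real.rpow_add hN0, Real.rpow_two]
    rw [hinv1, hinv2, hsplit, hvid]
    have hf1e : Matrix.vecMul π (Λm * H (e N)) ⬝ᵥ 1 = f₁ (e N) := rfl
    have hf2e : Matrix.vecMul π (Λm * H (e N) * Λm * ((2:ℝ)⁻¹ • H (2 * e N))) ⬝ᵥ 1
        = f₂ (e N) := rfl
    rw [hf1e, hf2e, hg]
    simp only
    ring
  refine hkey.trans_isLittleO ?_
  have term1 : (fun N : ℕ => (N : ℝ) ^ 2 * (g (e N) - e N * vv))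
      =o[atTop] fun N : ℕ => (N : ℝ) ^ (max (1 : ℝ) (2 - δ)) := by
    have hlo := hasDerivAt_iff_isLittleO.mp hgd
    simp only [hg0, sub_zero, smul_eq_mul] at hlo
    have h1 : (fun s => g s - s * vv) =o[𝓝 0] fun s => s := by
      simpa using hlo
    have h2 := h1.comp_tendsto he0
    have h3 := (isBigO_refl (fun N : ℕ => (N:ℝ) ^ 2) atTop).mul_isLittleO h2
    refine h3.trans_isBigO ?_
    rw [Asymptotics.isBigO_iff]
    refine ⟨1, ?_⟩
    filter_upwards [eventually_ge_atTop 1] with N hN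
    have hN1 : (1:ℝ) ≤ (N:ℝ) := by exact_mod_cast hN
    have hN0 : (0:ℝ) < (N:ℝ) := lt_of_lt_of_le one_pos hN1
    have hval : (N:ℝ) ^ 2 * e N = (N:ℝ) ^ ((2:ℝ) - δ) := by
      rw [he]
      simp only
      rw [sub_eq_add_neg, Real.rpow_add hN0, Real.rpow_two]
    have hle : (N:ℝ) ^ ((2:ℝ) - δ) ≤ (N:ℝ) ^ (max (1:ℝ) (2 - δ)) :=
      Real.rpow_le_rpow_of_exponent_le hN1 (le_max_right _ _)
    have hpos1 : (0:ℝ) < (N:ℝ) ^ ((2:ℝ) - δ) := Real.rpow_pos_of_pos hN0 _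
    have hpos2 : (0:ℝ) < (N:ℝ) ^ (max (1:ℝ) (2 - δ)) := Real.rpow_pos_of_pos hN0 _
    simp only [Function.comp]
    rw [Real.norm_eq_abs, Real.norm_eq_abs, hval, abs_of_pos hpos1, abs_of_pos hpos2, one_mul]
    exact hle
  have term2 : (fun N : ℕ => (N : ℝ) * ((f₁ (e N) - 2 * f₂ (e N)) - ρ * (1 - ρ)))
      =o[atTop] fun N : ℕ => (N : ℝ) ^ (max (1 : ℝ) (2 - δ)) := by
    have hf₁c : Tendsto (fun N : ℕ => f₁ (e N)) atTop (𝓝 (f₁ 0)) :=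
      (hf₁d.continuousAt.tendsto).comp he0
    have hf₂c : Tendsto (fun N : ℕ => f₂ (e N)) atTop (𝓝 (f₂ 0)) :=
      (hf₂d.continuousAt.tendsto).comp he0
    have hc : Tendsto (fun N : ℕ => (f₁ (e N) - 2 * f₂ (e N)) - ρ * (1 - ρ)) atTop (𝓝 0) := by
      have := (hf₁c.sub (hf₂c.const_mul 2)).sub_const (ρ * (1 - ρ))
      have hval : f₁ 0 - 2 * f₂ 0 - ρ * (1 - ρ) = 0 := by
        rw [hf₁0, hf₂0]; ring
      rwa [hval] at this
    have hlit : (fun N : ℕ => (f₁ (e N) - 2 * f₂ (e N)) - ρ * (1 - ρ)) =o[atTop]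
        (fun _ : ℕ => (1:ℝ)) := (Asymptotics.isLittleO_one_iff ℝ).mpr hc
    have h3 := (isBigO_refl (fun N : ℕ => (N:ℝ)) atTop).mul_isLittleO hlit
    refine h3.trans_isBigO ?_
    rw [Asymptotics.isBigO_iff]
    refine ⟨1, ?_⟩
    filter_upwards [eventually_ge_atTop 1] with N hN
    have hN1 : (1:ℝ) ≤ (N:ℝ) := by exact_mod_cast hN
    have hN0 : (0:ℝ) < (N:ℝ) := lt_of_lt_of_le one_pos hN1
    have hle : (N:ℝ) ^ ((1:ℝ)) ≤ (N:ℝ) ^ (max (1:ℝ) (2 - δ)) :=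
      Real.rpow_le_rpow_of_exponent_le hN1 (le_max_left _ _)
    rw [Real.rpow_one] at hle
    have hpos2 : (0:ℝ) < (N:ℝ) ^ (max (1:ℝ) (2 - δ)) := Real.rpow_pos_of_pos hN0 _
    rw [Real.norm_eq_abs, Real.norm_eq_abs, mul_one, abs_of_pos hN0, abs_of_pos hpos2, one_mul]
    exact hle
  exact term1.add term2
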